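/- There exist polynomials Q_{ij} ∈ ℂ[X] for 1 ≤ i,j ≤ n, each divisible by X^{D_1−1} and of degree at most 2k_0 + 1, such that for every ζ ∈ ℂ with |ζ| = 1 and all 1 ≤ i,j ≤ n one has ζ^{k_0} · Σ_{ℓ=1}^{d} c_ℓ · P_{ℓ,z_i w_j}((1−ζ)V, (1−conj ζ)·conj V) = (1 − conj ζ)^{D_1−2} · Q_{ij}(ζ). -/

import Mathlib

open ComplexConjugate

noncomputable section

lemma conj_eq_inv_of_norm_one' {ζ : ℂ} (h : ‖ζ‖ = 1) : conj ζ = ζ⁻¹ := by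
  have h1 : (starRingEnd ℂ) ζ * ζ = 1 := by
    rw [mul_comm, Complex.mul_conj]
    norm_cast
    rw [Complex.normSq_eq_norm_sq, h]
    norm_num
  exact eq_inv_of_mul_eq_one_left h1

lemma circle_pow' (ζ : ℂ) (hζ : ζ ≠ 0) (a' b' m s r : ℕ) (h : a' + b' = m + r) :
    ζ ^ (b' + s + 1) * ((1 - ζ) ^ a' * (1 - ζ⁻¹) ^ b')
      = (1 - ζ⁻¹) ^ m * ((-1 : ℂ) ^ (b' + m) * ζ ^ (m + s + 1) * (1 - ζ) ^ r) := by
  have hv : (1 - ζ⁻¹) = -(1 - ζ) * ζ⁻¹ := by field_simp; ring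
  have hexp : ∀ t : ℕ, (1 - ζ⁻¹) ^ t = (-1 : ℂ) ^ t * (1 - ζ) ^ t * (ζ ^ t)⁻¹ := by
    intro t
    rw [hv, mul_pow, neg_pow, inv_pow]
  have hmm : (-1 : ℂ) ^ m * (-1 : ℂ) ^ m = 1 := by
    rw [← pow_add, ← two_mul, pow_mul]
    norm_num
  have hL : ζ ^ (b' + s + 1) * ((1 - ζ) ^ a' * (1 - ζ⁻¹) ^ b')
      = (-1 : ℂ) ^ b' * ζ ^ (s + 1) * (1 - ζ) ^ (a' + b') := by
    calc ζ ^ (b' + s + 1) * ((1 - ζ) ^ a' * (1 - ζ⁻¹) ^ b')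
        = (ζ ^ b' * ζ ^ (s + 1)) * ((1 - ζ) ^ a' *
            ((-1 : ℂ) ^ b' * (1 - ζ) ^ b' * (ζ ^ b')⁻¹)) := by
          rw [hexp b', show b' + s + 1 = b' + (s + 1) from by omega, pow_add]
      _ = (-1 : ℂ) ^ b' * (ζ ^ b' * (ζ ^ b')⁻¹) * ζ ^ (s + 1) *
            ((1 - ζ) ^ a' * (1 - ζ) ^ b') := by ring
      _ = (-1 : ℂ) ^ b' * ζ ^ (s + 1) * (1 - ζ) ^ (a' + b') := by
          rw [mul_inv_cancel₀ (pow_ne_zero b' hζ), pow_add]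
          ring
  have hR : (1 - ζ⁻¹) ^ m * ((-1 : ℂ) ^ (b' + m) * ζ ^ (m + s + 1) * (1 - ζ) ^ r)
      = (-1 : ℂ) ^ b' * ζ ^ (s + 1) * (1 - ζ) ^ (m + r) := by
    calc (1 - ζ⁻¹) ^ m * ((-1 : ℂ) ^ (b' + m) * ζ ^ (m + s + 1) * (1 - ζ) ^ r)
        = ((-1 : ℂ) ^ m * (1 - ζ) ^ m * (ζ ^ m)⁻¹) *
            (((-1 : ℂ) ^ b' * (-1 : ℂ) ^ m) * (ζ ^ m * ζ ^ (s + 1)) * (1 - ζ) ^ r) := by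
          rw [hexp m, pow_add (-1 : ℂ) b' m,
            show m + s + 1 = m + (s + 1) from by omega, pow_add ζ m (s + 1)]
      _ = ((-1 : ℂ) ^ m * (-1 : ℂ) ^ m) * (-1 : ℂ) ^ b' * (ζ ^ m * (ζ ^ m)⁻¹) *
            ζ ^ (s + 1) * ((1 - ζ) ^ m * (1 - ζ) ^ r) := by ring
      _ = (-1 : ℂ) ^ b' * ζ ^ (s + 1) * (1 - ζ) ^ (m + r) := by
          rw [hmm, mul_inv_cancel₀ (pow_ne_zero m hζ), pow_add]
          ring
  rw [hL, hR, h]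

lemma natDeg_aux (a : ℂ) (e f : ℕ) :
    (Polynomial.C a * Polynomial.X ^ e * (1 - Polynomial.X) ^ f).natDegree ≤ e + f := by
  have hdeg1 : ((1 : Polynomial ℂ) - Polynomial.X).natDegree = 1 := by
    rw [show (1 : Polynomial ℂ) - Polynomial.X = -(Polynomial.X - Polynomial.C 1) from by
      rw [Polynomial.C_1]; ring, Polynomial.natDegree_neg, Polynomial.natDegree_X_sub_C]
  refine le_trans Polynomial.natDegree_mul_le (add_le_add ?_ ?_)
  · refine le_trans Polynomial.natDegree_mul_le ?_
    simp [Polynomial.natDegree_X_pow]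
  · refine le_trans Polynomial.natDegree_pow_le ?_
    rw [hdeg1, mul_one]

theorem stmt0
    (n d : ℕ) (hn : 1 ≤ n) (hd : 1 ≤ d)
    (D k : Fin d → ℕ) (k0 : ℕ)
    (hD1 : 2 ≤ D ⟨0, hd⟩) (hD1le : ∀ ℓ, D ⟨0, hd⟩ ≤ D ℓ)
    (hklow : ∀ ℓ, D ℓ ≤ 2 * k ℓ) (hkhigh : ∀ ℓ, k ℓ ≤ D ℓ - 1)
    (hk0 : ∀ ℓ, k ℓ ≤ k0) (hk0mem : ∃ ℓ, k ℓ = k0)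
    (P : Fin d → MvPolynomial (Fin n ⊕ Fin n) ℂ)
    (hsupp : ∀ ℓ, ∀ μ ∈ (P ℓ).support,
      ((∑ i, μ (Sum.inl i)) + (∑ i, μ (Sum.inr i)) = D ℓ ∧
        D ℓ - k ℓ ≤ ∑ i, μ (Sum.inl i)) ∧ (∑ i, μ (Sum.inl i)) ≤ k ℓ)
    (hreal : ∀ ℓ μ, MvPolynomial.coeff μ (P ℓ) =
      conj (MvPolynomial.coeff
        (Finsupp.equivMapDomain (Equiv.sumComm (Fin n) (Fin n)) μ) (P ℓ)))
    (c : Fin d → ℝ) (V : Fin n → ℂ) (hV : V ≠ 0) :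
    ∃ Q : Fin n → Fin n → Polynomial ℂ,
      (∀ i j, (Polynomial.X : Polynomial ℂ) ^ (D ⟨0, hd⟩ - 1) ∣ Q i j ∧
        (Q i j).natDegree ≤ 2 * k0 + 1) ∧
      ∀ ζ : ℂ, ‖ζ‖ = 1 → ∀ i j,
        ζ ^ k0 * ∑ ℓ, (c ℓ : ℂ) *
          MvPolynomial.eval
            (Sum.elim (fun p => (1 - ζ) * V p)
              (fun p => (1 - conj ζ) * conj (V p)))
            (MvPolynomial.pderiv (Sum.inl i) (MvPolynomial.pderiv (Sum.inr j) (P ℓ)))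
        = (1 - conj ζ) ^ (D ⟨0, hd⟩ - 2) * (Q i j).eval ζ := by
  refine ⟨fun i j => ∑ ℓ, ∑ μ ∈ (P ℓ).support,
      Polynomial.C ((c ℓ : ℂ) * MvPolynomial.coeff μ (P ℓ)
          * (μ (Sum.inr j) : ℂ) * (μ (Sum.inl i) : ℂ)
          * (∏ p, V p ^ (μ (Sum.inl p) - if i = p then 1 else 0))
          * (∏ p, conj (V p) ^ (μ (Sum.inr p) - if j = p then 1 else 0))
          * (-1 : ℂ) ^ ((∑ p, μ (Sum.inl p)) + D ℓ + D ⟨0, hd⟩ + 1))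
        * Polynomial.X ^ (k0 + (∑ p, μ (Sum.inl p)) + D ⟨0, hd⟩ - (D ℓ + 1))
        * (1 - Polynomial.X) ^ (D ℓ - D ⟨0, hd⟩), ?_, ?_⟩
  · intro i j
    constructor
    · refine Finset.dvd_sum fun ℓ _ => Finset.dvd_sum fun μ hμ => ?_
      obtain ⟨⟨hsum, hge⟩, hle⟩ := hsupp ℓ μ hμ
      have h1 := hD1le ℓ; have h2 := hk0 ℓ; have h3 := hkhigh ℓ; have h4 := hklow ℓ
      exact ((pow_dvd_pow (Polynomial.X : Polynomial ℂ) (by omega)).mul_left _).mul_right _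
    · refine Polynomial.natDegree_sum_le_of_forall_le _ _ fun ℓ _ =>
        Polynomial.natDegree_sum_le_of_forall_le _ _ fun μ hμ => ?_
      obtain ⟨⟨hsum, hge⟩, hle⟩ := hsupp ℓ μ hμ
      have h1 := hD1le ℓ; have h2 := hk0 ℓ; have h3 := hkhigh ℓ; have h4 := hklow ℓ
      exact le_trans (natDeg_aux _ _ _) (by omega)
  · intro ζ hζ i j
    have hz : ζ ≠ 0 := by
      intro h0; rw [h0] at hζ; simp at hζ
    have hc : conj ζ = ζ⁻¹ := conj_eq_inv_of_norm_one' hζ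
    have hL : ∀ ℓ : Fin d,
        MvPolynomial.eval (Sum.elim (fun p => (1 - ζ) * V p)
            (fun p => (1 - conj ζ) * conj (V p)))
          (MvPolynomial.pderiv (Sum.inl i) (MvPolynomial.pderiv (Sum.inr j) (P ℓ)))
        = ∑ μ ∈ (P ℓ).support,
            MvPolynomial.eval (Sum.elim (fun p => (1 - ζ) * V p)
                (fun p => (1 - conj ζ) * conj (V p)))
              (MvPolynomial.pderiv (Sum.inl i) (MvPolynomial.pderiv (Sum.inr j)
                (MvPolynomial.monomial μ (MvPolynomial.coeff μ (P ℓ))))) := by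
      intro ℓ
      conv_lhs => rw [← MvPolynomial.support_sum_monomial_coeff (P ℓ)]
      rw [map_sum, map_sum, map_sum]
    simp only [hL, Polynomial.eval_finset_sum, Finset.mul_sum]
    refine Finset.sum_congr rfl fun ℓ _ => Finset.sum_congr rfl fun μ hμ => ?_
    obtain ⟨⟨hsum, hge⟩, hle⟩ := hsupp ℓ μ hμ
    have h1 := hD1le ℓ; have h2 := hk0 ℓ; have h3 := hkhigh ℓ; have h4 := hklow ℓ
    rw [MvPolynomial.pderiv_monomial, MvPolynomial.pderiv_monomial,
      MvPolynomial.eval_monomial]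
    simp only [Finsupp.tsub_apply, Finsupp.single_apply, Sum.inr.injEq, Sum.inl.injEq,
      reduceCtorEq, if_false, Nat.sub_zero, if_true,
      Polynomial.eval_mul, Polynomial.eval_pow, Polynomial.eval_C, Polynomial.eval_X,
      Polynomial.eval_sub, Polynomial.eval_one,
      Finsupp.prod_pow, Fintype.prod_sum_type, Sum.elim_inl, Sum.elim_inr, mul_pow,
      Finset.prod_mul_distrib, Finset.prod_pow_eq_pow_sum]
    by_cases hmi : μ (Sum.inl i) = 0
    · simp [hmi]
    by_cases hmj : μ (Sum.inr j) = 0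
    · simp [hmj]
    have hai : μ (Sum.inl i) ≤ ∑ p, μ (Sum.inl p) :=
      Finset.single_le_sum (f := fun p => μ (Sum.inl p)) (fun _ _ => Nat.zero_le _)
        (Finset.mem_univ i)
    have haj : μ (Sum.inr j) ≤ ∑ p, μ (Sum.inr p) :=
      Finset.single_le_sum (f := fun p => μ (Sum.inr p)) (fun _ _ => Nat.zero_le _)
        (Finset.mem_univ j)
    have hA : (∑ p, (μ (Sum.inl p) - if i = p then 1 else 0))
        = (∑ p, μ (Sum.inl p)) - 1 := by
      rw [Finset.sum_tsub_distrib _ (fun p _ => ?_)]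
      · simp
      · by_cases h : i = p
        · subst h; simpa using Nat.one_le_iff_ne_zero.mpr hmi
        · simp [h]
    have hB : (∑ p, (μ (Sum.inr p) - if j = p then 1 else 0))
        = (∑ p, μ (Sum.inr p)) - 1 := by
      rw [Finset.sum_tsub_distrib _ (fun p _ => ?_)]
      · simp
      · by_cases h : j = p
        · subst h; simpa using Nat.one_le_iff_ne_zero.mpr hmj
        · simp [h]
    rw [hA, hB]
    have key := circle_pow' ζ hz ((∑ p, μ (Sum.inl p)) - 1) ((∑ p, μ (Sum.inr p)) - 1)
      (D ⟨0, hd⟩ - 2) (k0 - (∑ p, μ (Sum.inr p))) (D ℓ - D ⟨0, hd⟩) (by omega)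
    rw [show ((∑ p, μ (Sum.inr p)) - 1) + (k0 - (∑ p, μ (Sum.inr p))) + 1 = k0 from by
      omega] at key
    rw [show (D ⟨0, hd⟩ - 2) + (k0 - (∑ p, μ (Sum.inr p))) + 1
        = k0 + (∑ p, μ (Sum.inl p)) + D ⟨0, hd⟩ - (D ℓ + 1) from by omega] at key
    have hsign : ((-1 : ℂ)) ^ ((∑ p, μ (Sum.inl p)) + D ℓ + D ⟨0, hd⟩ + 1)
        = (-1 : ℂ) ^ (((∑ p, μ (Sum.inr p)) - 1) + (D ⟨0, hd⟩ - 2)) := by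
      rw [show (∑ p, μ (Sum.inl p)) + D ℓ + D ⟨0, hd⟩ + 1
          = ((((∑ p, μ (Sum.inr p)) - 1) + (D ⟨0, hd⟩ - 2)) + 2 * ((∑ p, μ (Sum.inl p)) + 2))
          from by omega]
      rw [pow_add, pow_mul]
      norm_num
    rw [hc, hsign]
    linear_combination ((c ℓ : ℂ) * MvPolynomial.coeff μ (P ℓ)
      * (μ (Sum.inr j) : ℂ) * (μ (Sum.inl i) : ℂ)
      * (∏ p, V p ^ (μ (Sum.inl p) - if i = p then 1 else 0))
      * (∏ p, conj (V p) ^ (μ (Sum.inr p) - if j = p then 1 else 0))) * key
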